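/- In $\U(t^{-1}\gl_N[t^{-1}])\otimes\CC[\tau]$, the Harish-Chandra projection (setting to zero all monomials containing off-diagonal generators $E_{ij}[r]$, $i\neq j$, modulo the left ideal generated by lower-triangular modes and right ideal by upper-triangular modes) of $\cdet(\tau + E[-1])$ equals the ordered product $(\tau + E_{NN}[-1])(\tau + E_{N-1,N-1}[-1])\cdots(\tau + E_{11}[-1])$. -/

import Mathlib

/-- Column determinant over a noncommutative ring. -/
noncomputable def cdet {R : Type*} [Ring R] (N : ℕ) (M : Fin N → Fin N → R) : R :=
  ∑ σ : Equiv.Perm (Fin N),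
    (Equiv.Perm.sign σ : ℤ) • ((List.finRange N).map (fun j => M (σ j) j)).prod

namespace CdetHC

variable {R : Type*} [Ring R] {N : ℕ}

/-- The matrix `τ + E[-1]`. -/
def Mmat (τ : R) (E : Fin N → Fin N → ℤ → R) (i j : Fin N) : R :=
  (if i = j then τ else 0) + E i j (-1)

/-- The left ideal generated by lower-triangular modes. -/
def Jid (E : Fin N → Fin N → ℤ → R) : Submodule R R :=
  Submodule.span R {x : R | ∃ (i j : Fin N) (r : ℤ), j < i ∧ r < 0 ∧ x = E i j r}

section lemmas

variable (τ : R) (E : Fin N → Fin N → ℤ → R)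
variable (hE : ∀ (i j k l : Fin N) (r s : ℤ), r < 0 → s < 0 →
      E i j r * E k l s - E k l s * E i j r =
        (if k = j then E i l (r + s) else 0) - (if i = l then E k j (r + s) else 0))
variable (hτ : ∀ (i j : Fin N) (r : ℤ), r < 0 →
      τ * E i j r - E i j r * τ = (-r) • E i j (r - 1))

include hτ in
lemma mulτ (a b : Fin N) (r : ℤ) (hr : r < 0) :
    E a b r * τ = τ * E a b r + r • E a b (r - 1) := by
  have h := hτ a b r hr
  have h2 : E a b r * τ - τ * E a b r = r • E a b (r - 1) := by
    rw [← neg_sub (τ * E a b r), h, neg_smul, neg_neg]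
  rw [sub_eq_iff_eq_add] at h2
  rw [h2, add_comm]

include hE hτ in
lemma pushJ : ∀ (l : List (Fin N)) (a b : Fin N) (r : ℤ), b < a → r < 0 →
    (∀ c ∈ l, c < b) →
    E a b r * ((l.map fun j => τ + E j j (-1)).prod) ∈ Jid E := by
  intro l
  induction l with
  | nil =>
    intro a b r hba hr _
    simp only [List.map_nil, List.prod_nil, mul_one]
    exact Submodule.subset_span ⟨a, b, r, hba, hr, rfl⟩
  | cons c t ih =>
    intro a b r hba hr hl
    have hcb : c < b := hl c (List.mem_cons_self (a := c) (l := t))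
    have hcomm : E a b r * (τ + E c c (-1)) =
        (τ + E c c (-1)) * E a b r + r • E a b (r - 1) := by
      have h1 := mulτ τ E hτ a b r hr
      have h2 : E a b r * E c c (-1) = E c c (-1) * E a b r := by
        have h := hE a b c c r (-1) hr (by norm_num)
        rw [if_neg (ne_of_gt (lt_trans hcb hba)), if_neg (ne_of_lt hcb)] at h
        rw [sub_self] at h
        exact sub_eq_zero.mp h
      rw [mul_add, add_mul, h1, h2]
      abel
    have hr1 : r - 1 < 0 := by omega
    have ht : ∀ x ∈ t, x < b := fun x hx => hl x (List.mem_cons_of_mem c hx)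
    have heq : E a b r * ((List.map (fun j => τ + E j j (-1)) (c :: t)).prod)
        = (τ + E c c (-1)) * (E a b r * (t.map fun j => τ + E j j (-1)).prod)
            + r • (E a b (r - 1) * (t.map fun j => τ + E j j (-1)).prod) := by
      rw [List.map_cons, List.prod_cons, ← mul_assoc, hcomm, add_mul, smul_mul_assoc, mul_assoc]
    rw [heq]
    apply Submodule.add_mem
    · have h := ih a b r hba hr ht
      simpa [smul_eq_mul] using (Jid E).smul_mem (τ + E c c (-1)) h
    · have h := ih a b (r - 1) hba hr1 ht
      rw [zsmul_eq_mul]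
      simpa [smul_eq_mul] using (Jid E).smul_mem ((r : R)) h


include hE hτ in
lemma mono_mem : ∀ (l : List (Fin N)) (σ : Equiv.Perm (Fin N)),
    List.Pairwise (fun a b => b < a) l →
    (∀ x ∈ l, ∀ y : Fin N, y < x → y ∈ l) →
    (∃ j ∈ l, σ j ≠ j) →
    ((l.map fun j => Mmat τ E (σ j) j).prod) ∈ Jid E := by
  intro l
  induction l with
  | nil => rintro σ _ _ ⟨j, hj, _⟩; exact absurd hj List.not_mem_nil
  | cons c t ih =>
    intro σ hp hdc hne
    have hct : ∀ x ∈ t, x < c := fun x hx => (List.pairwise_cons.mp hp).1 x hx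
    rw [List.map_cons, List.prod_cons]
    by_cases htne : ∃ j ∈ t, σ j ≠ j
    · have hdt : ∀ x ∈ t, ∀ y : Fin N, y < x → y ∈ t := by
        intro x hx y hyx
        have : y ∈ c :: t := hdc x (List.mem_cons_of_mem c hx) y hyx
        rcases List.mem_cons.mp this with h | h
        · exact absurd (h ▸ hyx) (not_lt.mpr (le_of_lt (hct x hx)))
        · exact h
      have h := ih σ (List.pairwise_cons.mp hp).2 hdt htne
      simpa [smul_eq_mul] using (Jid E).smul_mem (Mmat τ E (σ c) c) h
    · push_neg at htne
      have hσc : σ c ≠ c := by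
        obtain ⟨j, hj, hjne⟩ := hne
        rcases List.mem_cons.mp hj with h | h
        · exact h ▸ hjne
        · exact absurd (htne j h) hjne
      have hlt : c < σ c := by
        rcases lt_or_gt_of_ne hσc with h | h
        · exfalso
          have hmem : σ c ∈ c :: t := hdc c (List.mem_cons_self (a := c) (l := t)) (σ c) h
          have hmemt : σ c ∈ t := by
            rcases List.mem_cons.mp hmem with h' | h'
            · exact absurd h' hσc
            · exact h'
          have := htne (σ c) hmemt
          exact hσc (σ.injective this)
        · exact h
      have hMc : Mmat τ E (σ c) c = E (σ c) c (-1) := by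
        rw [Mmat, if_neg hσc, zero_add]
      have hmap : t.map (fun j => Mmat τ E (σ j) j) = t.map (fun j => τ + E j j (-1)) := by
        apply List.map_congr_left
        intro x hx
        rw [htne x hx, Mmat, if_pos rfl]
      rw [hMc, hmap]
      exact pushJ τ E hE hτ t (σ c) c (-1) hlt (by norm_num) hct

include hE hτ in
lemma manin (a x b y : Fin N) :
    Mmat τ E a x * Mmat τ E b y - Mmat τ E b y * Mmat τ E a x =
    Mmat τ E b x * Mmat τ E a y - Mmat τ E a y * Mmat τ E b x := by
  have Dform : ∀ a x b y : Fin N,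
      Mmat τ E a x * Mmat τ E b y - Mmat τ E b y * Mmat τ E a x =
      ((if a = x then E b y (-2) else 0) - (if b = y then E a x (-2) else 0))
        + ((if b = x then E a y (-2) else 0) - (if a = y then E b x (-2) else 0)) := by
    intro a x b y
    have h4 := hE a x b y (-1) (-1) (by norm_num) (by norm_num)
    norm_num at h4
    have hc1 : (if a = x then τ else 0) * (if b = y then τ else 0)
        - (if b = y then τ else 0) * (if a = x then τ else 0) = 0 := by
      split_ifs <;> simp
    have h2 : (if a = x then τ else 0) * E b y (-1) - E b y (-1) * (if a = x then τ else 0)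
        = (if a = x then E b y (-2) else 0) := by
      split_ifs with h
      · have := hτ b y (-1) (by norm_num)
        norm_num at this
        exact this
      · simp
    have h3 : E a x (-1) * (if b = y then τ else 0) - (if b = y then τ else 0) * E a x (-1)
        = -(if b = y then E a x (-2) else 0) := by
      split_ifs with h
      · have := hτ a x (-1) (by norm_num)
        norm_num at this
        rw [← neg_sub (τ * E a x (-1)), this]
      · simp
    have expand : Mmat τ E a x * Mmat τ E b y - Mmat τ E b y * Mmat τ E a x =
        ((if a = x then τ else 0) * (if b = y then τ else 0)
          - (if b = y then τ else 0) * (if a = x then τ else 0))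
        + (((if a = x then τ else 0) * E b y (-1) - E b y (-1) * (if a = x then τ else 0))
        + ((E a x (-1) * (if b = y then τ else 0) - (if b = y then τ else 0) * E a x (-1))
        + (E a x (-1) * E b y (-1) - E b y (-1) * E a x (-1)))) := by
      rw [Mmat, Mmat]
      noncomm_ring
    rw [expand, hc1, h2, h3, h4]
    abel
  rw [Dform a x b y, Dform b x a y]
  abel


/-- Signed sum of column-ordered monomials, for an arbitrary ordered list of columns. -/
noncomputable def Ssum (τ : R) (E : Fin N → Fin N → ℤ → R) (t : List (Fin N)) : R :=
  ∑ σ : Equiv.Perm (Fin N),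
    (Equiv.Perm.sign σ : ℤ) • (t.map fun j => Mmat τ E (σ j) j).prod

include hE hτ in
lemma perm_S : ∀ {l l' : List (Fin N)}, l.Perm l' → ∀ p : List (Fin N),
    (p ++ l).Nodup → Ssum τ E (p ++ l) = Ssum τ E (p ++ l') := by
  intro l l' h
  induction h with
  | nil => intro p _; rfl
  | cons a h ih =>
    intro p hnd
    rename_i l1 l2
    rw [List.append_cons p a l1, List.append_cons p a l2]
    exact ih (p ++ [a]) (by rwa [← List.append_cons p a l1])
  | swap x y l =>
    intro p hnd
    -- goal : Ssum τ E (p ++ y :: x :: l) = Ssum τ E (p ++ x :: y :: l)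
    have hnd2 : (y :: x :: l).Nodup := (List.nodup_append'.mp hnd).2.1
    have hxy : x ≠ y := by
      intro h
      exact (List.nodup_cons.mp hnd2).1 (h ▸ List.mem_cons_self (a := x) (l := l))
    have hyx : y ≠ x := Ne.symm hxy
    obtain ⟨hndp, -, hdisj⟩ := List.nodup_append'.mp hnd
    have hxp : x ∉ p := fun h => hdisj h (by simp)
    have hyp : y ∉ p := fun h => hdisj h (by simp)
    have hyl : y ∉ l := fun h => (List.nodup_cons.mp hnd2).1 (by simp [h])
    have hxl : x ∉ l := fun h =>
      (List.nodup_cons.mp (List.nodup_cons.mp hnd2).2).1 (by simp [h])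
    have hsplit : ∀ (σ : Equiv.Perm (Fin N)) (a b : Fin N),
        ((p ++ a :: b :: l).map fun j => Mmat τ E (σ j) j).prod =
        (p.map fun j => Mmat τ E (σ j) j).prod *
          (Mmat τ E (σ a) a * (Mmat τ E (σ b) b *
            (l.map fun j => Mmat τ E (σ j) j).prod)) := by
      intro σ a b
      simp [List.prod_cons, mul_assoc]
    rw [← sub_eq_zero]
    unfold Ssum
    rw [← Finset.sum_sub_distrib]
    apply Finset.sum_ninvolution (g := fun σ => σ * Equiv.swap x y)
    · intro σ
      have happ : ∀ c : Fin N, c ≠ x → c ≠ y → (σ * Equiv.swap x y) c = σ c := by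
        intro c h1 h2
        rw [Equiv.Perm.mul_apply, Equiv.swap_apply_of_ne_of_ne h1 h2]
      have hP : (p.map fun j => Mmat τ E ((σ * Equiv.swap x y) j) j) =
          p.map fun j => Mmat τ E (σ j) j :=
        List.map_congr_left fun c hc => by
          rw [happ c (fun h => hxp (h ▸ hc)) (fun h => hyp (h ▸ hc))]
      have hL : (l.map fun j => Mmat τ E ((σ * Equiv.swap x y) j) j) =
          l.map fun j => Mmat τ E (σ j) j :=
        List.map_congr_left fun c hc => by
          rw [happ c (fun h => hxl (h ▸ hc)) (fun h => hyl (h ▸ hc))]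
      have hx' : (σ * Equiv.swap x y) x = σ y := by
        rw [Equiv.Perm.mul_apply, Equiv.swap_apply_left]
      have hy' : (σ * Equiv.swap x y) y = σ x := by
        rw [Equiv.Perm.mul_apply, Equiv.swap_apply_right]
      have hsgn : ((Equiv.Perm.sign (σ * Equiv.swap x y) : ℤ)) =
          -(Equiv.Perm.sign σ : ℤ) := by
        rw [map_mul, Equiv.Perm.sign_swap hxy]
        simp
      rw [hsplit σ y x, hsplit σ x y,
        hsplit (σ * Equiv.swap x y) y x, hsplit (σ * Equiv.swap x y) x y,
        hP, hL, hx', hy', hsgn]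
      set z : ℤ := (Equiv.Perm.sign σ : ℤ)
      set P := (p.map fun j => Mmat τ E (σ j) j).prod
      set L := (l.map fun j => Mmat τ E (σ j) j).prod
      set m1 := Mmat τ E (σ y) y
      set m2 := Mmat τ E (σ x) x
      set m3 := Mmat τ E (σ x) y
      set m4 := Mmat τ E (σ y) x
      have hman := manin τ E hE hτ (σ y) y (σ x) x
      have hzero : m1 * m2 - m2 * m1 - (m3 * m4 - m4 * m3) = 0 :=
        sub_eq_zero.mpr hman
      have hexp : P * ((m1 * m2 - m2 * m1 - (m3 * m4 - m4 * m3)) * L) =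
          P * (m1 * (m2 * L)) - P * (m2 * (m1 * L))
            - (P * (m3 * (m4 * L)) - P * (m4 * (m3 * L))) := by
        noncomm_ring
      have hgoal : z • (P * (m1 * (m2 * L))) - z • (P * (m2 * (m1 * L)))
          + (-z • (P * (m3 * (m4 * L))) - -z • (P * (m4 * (m3 * L))))
          = z • (P * ((m1 * m2 - m2 * m1 - (m3 * m4 - m4 * m3)) * L)) := by
        rw [hexp]
        simp only [neg_smul, smul_sub]
        abel
      rw [hgoal, hzero, zero_mul, mul_zero, smul_zero]
    · intro σ _ h
      have h1 : Equiv.swap x y = 1 := by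
        have h2 := congrArg (fun τ => σ⁻¹ * τ) h
        simpa [← mul_assoc] using h2
      have h3 := congrArg (fun e : Equiv.Perm (Fin N) => e x) h1
      simp [Equiv.swap_apply_left] at h3
      exact hyx h3
    · intro σ; exact Finset.mem_univ _
    · intro σ
      rw [mul_assoc, Equiv.swap_mul_self, mul_one]
  | trans h1 h2 ih1 ih2 =>
    intro p hnd
    refine (ih1 p hnd).trans (ih2 p ?_)
    exact ((h1.append_left p).nodup_iff).mp hnd

end lemmas

end CdetHC

/-- the Harish-Chandra projection of `cdet(τ + E[-1])` is the ordered product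
`(τ + E_{NN}[-1]) ⋯ (τ + E_{11}[-1])`.  Equivalently, the difference
`cdet(τ + E[-1]) - (τ + E_{NN}[-1]) ⋯ (τ + E_{11}[-1])` lies in the left ideal generated by
the lower-triangular modes `E_{ij}[r]`, `i > j`, `r < 0`, along which the Harish-Chandra
homomorphism projects. -/
theorem cdet_HC_image {R : Type*} [Ring R] (N : ℕ) (τ : R)
    (E : Fin N → Fin N → ℤ → R)
    (hE : ∀ (i j k l : Fin N) (r s : ℤ), r < 0 → s < 0 →
      E i j r * E k l s - E k l s * E i j r =
        (if k = j then E i l (r + s) else 0) - (if i = l then E k j (r + s) else 0))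
    (hτ : ∀ (i j : Fin N) (r : ℤ), r < 0 →
      τ * E i j r - E i j r * τ = (-r) • E i j (r - 1)) :
    cdet N (fun i j => (if i = j then τ else 0) + E i j (-1))
      - ((List.finRange N).reverse.map (fun i => τ + E i i (-1))).prod
    ∈ Submodule.span R {x : R | ∃ (i j : Fin N) (r : ℤ), j < i ∧ r < 0 ∧ x = E i j r} := by
  classical
  show _ ∈ CdetHC.Jid E
  have h1 : cdet N (fun i j => (if i = j then τ else 0) + E i j (-1)) =
      CdetHC.Ssum τ E (List.finRange N) := rfl
  have h2 : CdetHC.Ssum τ E (List.finRange N) =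
      CdetHC.Ssum τ E ((List.finRange N).reverse) := by
    have := CdetHC.perm_S τ E hE hτ (List.reverse_perm (List.finRange N)).symm []
      (by simpa using List.nodup_finRange N)
    simpa using this
  have hdiag : (((List.finRange N).reverse).map
      (fun j => CdetHC.Mmat τ E ((1 : Equiv.Perm (Fin N)) j) j)).prod =
      ((List.finRange N).reverse.map (fun i => τ + E i i (-1))).prod := by
    congr 1
    apply List.map_congr_left
    intro c _
    simp [CdetHC.Mmat]
  have h3 : CdetHC.Ssum τ E ((List.finRange N).reverse) =
      ((List.finRange N).reverse.map (fun i => τ + E i i (-1))).prod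
      + ∑ σ ∈ (Finset.univ.erase (1 : Equiv.Perm (Fin N))),
          (Equiv.Perm.sign σ : ℤ) •
            (((List.finRange N).reverse).map (fun j => CdetHC.Mmat τ E (σ j) j)).prod := by
    rw [CdetHC.Ssum, ← Finset.add_sum_erase Finset.univ _ (Finset.mem_univ 1)]
    rw [hdiag]
    simp
  rw [h1, h2, h3, add_sub_cancel_left]
  apply Submodule.sum_mem
  intro σ hσ
  have hσ1 : σ ≠ 1 := (Finset.mem_erase.mp hσ).1
  have hmono : (((List.finRange N).reverse).map
      (fun j => CdetHC.Mmat τ E (σ j) j)).prod ∈ CdetHC.Jid E := by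
    apply CdetHC.mono_mem τ E hE hτ
    · have := List.pairwise_lt_finRange N
      exact (List.pairwise_reverse).mpr (by simpa using this)
    · intro a _ b _
      simp
    · by_contra h
      push_neg at h
      exact hσ1 (Equiv.ext fun j => h j (by simp))
  rw [zsmul_eq_mul]
  simpa [smul_eq_mul] using (CdetHC.Jid E).smul_mem ((Equiv.Perm.sign σ : ℤ) : R) hmono
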